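/- Every maximal triple (S₁,S₂,S₃) of nonempty subsets of the special-color labels Λ_s satisfying the universal quantifier with respect to the special-color constraint ℰ_s is dominated by ({XY00, XY01, MM}, Λ_s, Λ_s) or by ({XY10, XY11, MM}, Λ_s, Λ_s), i.e., up to a permutation of the components each Sⱼ is contained in the corresponding component of one of these two triples. -/

import Mathlib

/-- A two-bit label: the first component is the input bit, the second the output bit. -/
abbrev TwoBit := Bool × Bool

def b00 : TwoBit := (false, false)
def b01 : TwoBit := (false, true)
def b10 : TwoBit := (true, false)
def b11 : TwoBit := (true, true)

/-- The 22 maximal bit triples. -/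
def bitTriples : List (Fin 3 → Set TwoBit) :=
  [ ![{b00, b10, b11}, {b00}, {b00}],
    ![{b01, b10, b11}, {b00}, {b01}],
    ![{b00, b10, b11}, {b01}, {b01}],
    ![{b00, b01, b11}, {b00}, {b10}],
    ![{b00, b01, b10}, {b00}, {b11}],
    ![{b00, b01, b10}, {b01}, {b10}],
    ![{b00, b01, b11}, {b01}, {b11}],
    ![{b01, b10, b11}, {b10}, {b10}],
    ![{b00, b10, b11}, {b10}, {b11}],
    ![{b01, b10, b11}, {b11}, {b11}],
    ![{b00, b10}, {b00}, {b00, b11}],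
    ![{b01, b11}, {b00}, {b01, b10}],
    ![{b00, b10}, {b01}, {b01, b10}],
    ![{b01, b11}, {b00, b11}, {b01}],
    ![{b00, b10}, {b01, b11}, {b10}],
    ![{b11}, {b00, b10}, {b00, b10}],
    ![{b10}, {b01, b10}, {b01, b10}],
    ![{b10}, {b00, b11}, {b00, b11}],
    ![{b00, b11}, {b01, b10}, {b11}],
    ![{b11}, {b01, b11}, {b01, b11}],
    ![{b10, b11}, {b00, b01}, {b00, b01}],
    ![{b10, b11}, {b10, b11}, {b10, b11}] ]

/-- The ten present-color labels Λ_p = {EE, MM, MY0, MY1, XM0, XM1, XY00, XY01, XY10, XY11}. -/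
inductive Lab where
  | EE : Lab
  | MM : Lab
  | MY : Bool → Lab
  | XM : Bool → Lab
  | XY : Bool → Bool → Lab
deriving DecidableEq

open Lab

/-- Augmentation of a set of two-bit labels: replace each two-bit label `xy` by `XY x y`;
add `XM x` if both `XY x 0` and `XY x 1` are present; add `MY y` if both `XY 0 y` and
`XY 1 y` are present; and always add `MM`. -/
def aug (T : Set TwoBit) : Set Lab :=
  {MM} ∪ {l | ∃ x y, (x, y) ∈ T ∧ l = XY x y}
    ∪ {l | ∃ x, (x, false) ∈ T ∧ (x, true) ∈ T ∧ l = XM x}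
    ∪ {l | ∃ y, (false, y) ∈ T ∧ (true, y) ∈ T ∧ l = MY y}

/-- The 23 condensed configurations defining the present-color constraint. -/
def condP : List (Fin 3 → Set Lab) :=
  bitTriples.map (fun T => fun j => aug (T j)) ++ [![{MM}, Set.univ, Set.univ]]

/-- The seven special-color labels Λ_s = {MM, MY0, MY1, XY00, XY01, XY10, XY11}. -/
inductive LabS where
  | MM : LabS
  | MY : Bool → LabS
  | XY : Bool → Bool → LabS
deriving DecidableEq

/-- The inclusion of the special-color labels Λ_s into the present-color labels Λ_p. -/
def embedS : LabS → Lab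
  | LabS.MM => Lab.MM
  | LabS.MY y => Lab.MY y
  | LabS.XY x y => Lab.XY x y

/-- The condensed configurations defining the special-color constraint, obtained from the
23 condensed configurations defining ℰ_p by deleting EE, XM0 and XM1 from every
component. -/
def condS : List (Fin 3 → Set LabS) :=
  condP.map (fun D => fun j => embedS ⁻¹' (D j))

/-- The special-color constraint ℰ_s: the family of size-3 multisets represented by the
condensed configurations `condS`. -/
def Es : Set (Multiset LabS) :=
  {C | ∃ D ∈ condS, ∃ l₁ ∈ D 0, ∃ l₂ ∈ D 1, ∃ l₃ ∈ D 2,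
    C = ({l₁, l₂, l₃} : Multiset LabS)}

/-- A triple of sets of special-color labels satisfies the universal quantifier w.r.t.
ℰ_s if every choice of one label per component yields a multiset in ℰ_s. -/
def EsUQ (S : Fin 3 → Set LabS) : Prop :=
  ∀ l₁ ∈ S 0, ∀ l₂ ∈ S 1, ∀ l₃ ∈ S 2, ({l₁, l₂, l₃} : Multiset LabS) ∈ Es



set_option maxHeartbeats 1000000

lemma pair_eq {α} [DecidableEq α] {b c l2 l3 : α} (h : ({b,c}:Multiset α) = {l2,l3}) :
    (b=l2∧c=l3)∨(b=l3∧c=l2) := by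
  simp only [Multiset.insert_eq_cons, Multiset.cons_eq_cons] at h
  rcases h with ⟨rfl, h⟩ | ⟨hne, cs, h1, h2⟩
  · left; exact ⟨rfl, by simpa using h⟩
  · rw [Multiset.singleton_eq_cons_iff] at h1 h2
    exact Or.inr ⟨h2.1.symm, h1.1⟩

lemma triple_eq {α} [DecidableEq α] {a b c l1 l2 l3 : α}
    (h : ({a,b,c}:Multiset α) = {l1,l2,l3}) :
    (a=l1∧b=l2∧c=l3)∨(a=l1∧b=l3∧c=l2)∨(a=l2∧b=l1∧c=l3)∨(a=l2∧b=l3∧c=l1)∨(a=l3∧b=l1∧c=l2)∨(a=l3∧b=l2∧c=l1) := by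
  have h' : a ::ₘ ({b,c}:Multiset α) = l1 ::ₘ ({l2,l3}:Multiset α) := by
    simpa [Multiset.insert_eq_cons] using h
  rw [Multiset.cons_eq_cons] at h'
  rcases h' with ⟨rfl, h2⟩ | ⟨hne, cs, h1, h2⟩
  · rcases pair_eq h2 with ⟨rfl, rfl⟩ | ⟨rfl, rfl⟩
    · exact Or.inl ⟨rfl, rfl, rfl⟩
    · exact Or.inr (Or.inl ⟨rfl, rfl, rfl⟩)
  · have h1' : b ::ₘ ({c}:Multiset α) = l1 ::ₘ cs := by simpa [Multiset.insert_eq_cons] using h1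
    rw [Multiset.cons_eq_cons] at h1'
    rcases h1' with ⟨rfl, rfl⟩ | ⟨hne2, ds, hd1, hd2⟩
    · have h2' : ({l2,l3}:Multiset α) = ({a,c}:Multiset α) := by
        simpa [Multiset.insert_eq_cons] using h2
      rcases pair_eq h2' with ⟨rfl, rfl⟩ | ⟨rfl, rfl⟩
      · exact Or.inr (Or.inr (Or.inl ⟨rfl, rfl, rfl⟩))
      · exact Or.inr (Or.inr (Or.inr (Or.inr (Or.inl ⟨rfl, rfl, rfl⟩))))
    · rw [Multiset.singleton_eq_cons_iff] at hd1
      obtain ⟨rfl, rfl⟩ := hd1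
      have h2' : ({l2,l3}:Multiset α) = ({a,b}:Multiset α) := by
        simpa [Multiset.insert_eq_cons, hd2] using h2
      rcases pair_eq h2' with ⟨rfl, rfl⟩ | ⟨rfl, rfl⟩
      · exact Or.inr (Or.inr (Or.inr (Or.inl ⟨rfl, rfl, rfl⟩)))
      · exact Or.inr (Or.inr (Or.inr (Or.inr (Or.inr ⟨rfl, rfl, rfl⟩))))

def btL : List (Fin 3 → List TwoBit) :=
  [ ![[b00, b10, b11], [b00], [b00]],
    ![[b01, b10, b11], [b00], [b01]],
    ![[b00, b10, b11], [b01], [b01]],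
    ![[b00, b01, b11], [b00], [b10]],
    ![[b00, b01, b10], [b00], [b11]],
    ![[b00, b01, b10], [b01], [b10]],
    ![[b00, b01, b11], [b01], [b11]],
    ![[b01, b10, b11], [b10], [b10]],
    ![[b00, b10, b11], [b10], [b11]],
    ![[b01, b10, b11], [b11], [b11]],
    ![[b00, b10], [b00], [b00, b11]],
    ![[b01, b11], [b00], [b01, b10]],
    ![[b00, b10], [b01], [b01, b10]],
    ![[b01, b11], [b00, b11], [b01]],
    ![[b00, b10], [b01, b11], [b10]],
    ![[b11], [b00, b10], [b00, b10]],
    ![[b10], [b01, b10], [b01, b10]],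
    ![[b10], [b00, b11], [b00, b11]],
    ![[b00, b11], [b01, b10], [b11]],
    ![[b11], [b01, b11], [b01, b11]],
    ![[b10, b11], [b00, b01], [b00, b01]],
    ![[b10, b11], [b10, b11], [b10, b11]] ]

def chkB (l : LabS) (L : List TwoBit) : Bool :=
  match l with
  | .MM => true
  | .MY y => decide ((false, y) ∈ L) && decide ((true, y) ∈ L)
  | .XY x y => decide ((x, y) ∈ L)

def permsL : List (Fin 3 → Fin 3) :=
  [![0,1,2], ![0,2,1], ![1,0,2], ![1,2,0], ![2,0,1], ![2,1,0]]

def EsB (a b c : LabS) : Bool :=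
  decide (a = LabS.MM) || decide (b = LabS.MM) || decide (c = LabS.MM) ||
  btL.any fun t => permsL.any fun σ =>
    chkB a (t (σ 0)) && chkB b (t (σ 1)) && chkB c (t (σ 2))

lemma chk_bridge {l : LabS} {T : Set TwoBit} {L : List TwoBit}
    (hTL : ∀ p, p ∈ T ↔ p ∈ L) (h : embedS l ∈ aug T) : chkB l L = true := by
  cases l with
  | MM => rfl
  | MY y =>
    simp only [aug, embedS, Set.mem_union, Set.mem_setOf_eq, Set.mem_singleton_iff,
      reduceCtorEq, and_false, exists_false, or_false, false_or, Lab.MY.injEq] at h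
    obtain ⟨y', hy1, hy2, rfl⟩ := h
    simp only [chkB, Bool.and_eq_true, decide_eq_true_eq]
    exact ⟨(hTL _).mp hy1, (hTL _).mp hy2⟩
  | XY x y =>
    simp only [aug, embedS, Set.mem_union, Set.mem_setOf_eq, Set.mem_singleton_iff,
      reduceCtorEq, and_false, exists_false, or_false, false_or, Lab.XY.injEq] at h
    obtain ⟨x', y', hxy, rfl, rfl⟩ := h
    simp only [chkB, decide_eq_true_eq]
    exact (hTL _).mp hxy

lemma bt_corr : List.Forall₂ (fun (T : Fin 3 → Set TwoBit) (L : Fin 3 → List TwoBit) =>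
    ∀ j p, p ∈ T j ↔ p ∈ L j) bitTriples btL := by
  rw [bitTriples, btL]
  refine .cons ?_ (.cons ?_ (.cons ?_ (.cons ?_ (.cons ?_ (.cons ?_ (.cons ?_ (.cons ?_
    (.cons ?_ (.cons ?_ (.cons ?_ (.cons ?_ (.cons ?_ (.cons ?_ (.cons ?_ (.cons ?_
    (.cons ?_ (.cons ?_ (.cons ?_ (.cons ?_ (.cons ?_ (.cons ?_ .nil))))))))))))))))))))) <;>
  · intro j p
    fin_cases j <;> simp

lemma main_bt {T : Fin 3 → Set TwoBit} {L : Fin 3 → List TwoBit}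
    (hTL : ∀ j p, p ∈ T j ↔ p ∈ L j) (hL : L ∈ btL)
    {a b c l1 l2 l3 : LabS}
    (h1 : embedS l1 ∈ aug (T 0)) (h2 : embedS l2 ∈ aug (T 1)) (h3 : embedS l3 ∈ aug (T 2))
    (hC : ({a,b,c} : Multiset LabS) = {l1,l2,l3}) : EsB a b c = true := by
  have c1 := chk_bridge (hTL 0) h1
  have c2 := chk_bridge (hTL 1) h2
  have c3 := chk_bridge (hTL 2) h3
  have main : ∃ t ∈ btL, ∃ σ ∈ permsL,
      (chkB a (t (σ 0)) && chkB b (t (σ 1)) && chkB c (t (σ 2))) = true := by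
    rcases triple_eq hC with ⟨rfl,rfl,rfl⟩|⟨rfl,rfl,rfl⟩|⟨rfl,rfl,rfl⟩|⟨rfl,rfl,rfl⟩|⟨rfl,rfl,rfl⟩|⟨rfl,rfl,rfl⟩
    · exact ⟨L, hL, ![0,1,2], by simp [permsL], by simp [c1, c2, c3]⟩
    · exact ⟨L, hL, ![0,2,1], by simp [permsL], by simp [c1, c2, c3]⟩
    · exact ⟨L, hL, ![1,0,2], by simp [permsL], by simp [c1, c2, c3]⟩
    · exact ⟨L, hL, ![1,2,0], by simp [permsL], by simp [c1, c2, c3]⟩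
    · exact ⟨L, hL, ![2,0,1], by simp [permsL], by simp [c1, c2, c3]⟩
    · exact ⟨L, hL, ![2,1,0], by simp [permsL], by simp [c1, c2, c3]⟩
  simp only [EsB, Bool.or_eq_true, List.any_eq_true]
  exact Or.inr main

lemma mem_Es_mp {a b c : LabS} (h : ({a,b,c} : Multiset LabS) ∈ Es) : EsB a b c = true := by
  obtain ⟨D, hD, l1, h1, l2, h2, l3, h3, hC⟩ := h
  rw [condS, List.mem_map] at hD
  obtain ⟨D', hD', rfl⟩ := hD
  rw [condP, List.mem_append] at hD'
  rcases hD' with hD' | hD'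
  · rw [List.mem_map] at hD'
    obtain ⟨T, hT, rfl⟩ := hD'
    obtain ⟨i, hi⟩ := List.mem_iff_get.mp hT
    have hlen := bt_corr.length_eq
    have hR := (List.forall₂_iff_get.mp bt_corr).2 i.1 i.2 (by omega)
    rw [hi] at hR
    exact main_bt hR (List.get_mem _ _) h1 h2 h3 hC
  · simp only [List.mem_singleton] at hD'
    subst hD'
    have hl1 : l1 = LabS.MM := by
      cases l1 <;> simpa [embedS] using h1
    subst hl1
    rcases triple_eq hC with ⟨rfl,_⟩|⟨rfl,_⟩|⟨_,rfl,_⟩|⟨_,_,rfl⟩|⟨_,rfl,_⟩|⟨_,_,rfl⟩ <;>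
      simp [EsB]

def LA : List LabS := [.MY false, .MY true, .XY true false, .XY true true]
def LB : List LabS := [.MY false, .MY true, .XY false false, .XY false true]

lemma notA_mem {l : LabS}
    (h : l ∉ ({LabS.XY false false, LabS.XY false true, LabS.MM} : Set LabS)) : l ∈ LA := by
  simp only [Set.mem_insert_iff, Set.mem_singleton_iff, not_or] at h
  rcases l with _ | y | ⟨x, y⟩
  · exact absurd rfl h.2.2
  · cases y <;> simp [LA]
  · cases x <;> cases y <;> simp_all [LA]

lemma notB_mem {l : LabS}
    (h : l ∉ ({LabS.XY true false, LabS.XY true true, LabS.MM} : Set LabS)) : l ∈ LB := by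
  simp only [Set.mem_insert_iff, Set.mem_singleton_iff, not_or] at h
  rcases l with _ | y | ⟨x, y⟩
  · exact absurd rfl h.2.2
  · cases y <;> simp [LB]
  · cases x <;> cases y <;> simp_all [LB]

set_option maxHeartbeats 4000000 in
lemma key : ∀ a1 ∈ LA, ∀ b1 ∈ LB, ∀ a2 ∈ LA, ∀ b2 ∈ LB, ∀ a3 ∈ LA, ∀ b3 ∈ LB,
    ¬(EsB a1 a2 a3 = true ∧ EsB a1 a2 b3 = true ∧ EsB a1 b2 a3 = true ∧ EsB a1 b2 b3 = true ∧
      EsB b1 a2 a3 = true ∧ EsB b1 a2 b3 = true ∧ EsB b1 b2 a3 = true ∧ EsB b1 b2 b3 = true) := by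
  decide

lemma comp_univ {A : Set LabS} (m : Fin 3) (hm : m ≠ 0) :
    (![A, Set.univ, Set.univ] : Fin 3 → Set LabS) m = Set.univ := by
  fin_cases m
  · exact absurd rfl hm
  · rfl
  · rfl

lemma dominate {A : Set LabS} {S : Fin 3 → Set LabS} {j : Fin 3} (hj : S j ⊆ A) :
    ∃ ρ : Equiv.Perm (Fin 3), ∀ k,
      S k ⊆ (![A, Set.univ, Set.univ] : Fin 3 → Set LabS) (ρ k) := by
  refine ⟨Equiv.swap 0 j, fun k => ?_⟩
  by_cases hk : k = j
  · subst hk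
    rw [Equiv.swap_apply_right]
    exact hj
  · have hne : Equiv.swap 0 j k ≠ 0 := fun h => hk <| (Equiv.swap 0 j).injective
      (h.trans (Equiv.swap_apply_right 0 j).symm)
    rw [comp_univ _ hne]
    exact Set.subset_univ _


/-- **Domination of the maximal special-color triples.** Every maximal triple of nonempty
subsets of Λ_s satisfying the universal quantifier w.r.t. ℰ_s is dominated by
({XY00, XY01, MM}, Λ_s, Λ_s) or by ({XY10, XY11, MM}, Λ_s, Λ_s): up to a permutation of
the components, each S j is contained in the corresponding component. -/
theorem special_color_maximal_dominated (S : Fin 3 → Set LabS)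
    (hne : ∀ j, (S j).Nonempty)
    (hUQ : EsUQ S)
    (hmax : ¬ ∃ S' : Fin 3 → Set LabS,
        EsUQ S' ∧ (∀ j, S j ⊆ S' j) ∧ (∃ j, S j ⊂ S' j)) :
    (∃ ρ : Equiv.Perm (Fin 3), ∀ j,
        S j ⊆ (![{LabS.XY false false, LabS.XY false true, LabS.MM},
                  Set.univ, Set.univ] : Fin 3 → Set LabS) (ρ j)) ∨
    (∃ ρ : Equiv.Perm (Fin 3), ∀ j,
        S j ⊆ (![{LabS.XY true false, LabS.XY true true, LabS.MM},
                  Set.univ, Set.univ] : Fin 3 → Set LabS) (ρ j)) := by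
  have hkey : ∃ j : Fin 3,
      S j ⊆ ({LabS.XY false false, LabS.XY false true, LabS.MM} : Set LabS) ∨
      S j ⊆ ({LabS.XY true false, LabS.XY true true, LabS.MM} : Set LabS) := by
    by_contra hno
    push_neg at hno
    have wa : ∀ j : Fin 3, ∃ x ∈ S j, x ∈ LA := fun j => by
      obtain ⟨x, hx, hxn⟩ := Set.not_subset.mp (hno j).1
      exact ⟨x, hx, notA_mem hxn⟩
    have wb : ∀ j : Fin 3, ∃ x ∈ S j, x ∈ LB := fun j => by
      obtain ⟨x, hx, hxn⟩ := Set.not_subset.mp (hno j).2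
      exact ⟨x, hx, notB_mem hxn⟩
    obtain ⟨a1, ha1S, ha1⟩ := wa 0
    obtain ⟨a2, ha2S, ha2⟩ := wa 1
    obtain ⟨a3, ha3S, ha3⟩ := wa 2
    obtain ⟨c1, hb1S, hb1⟩ := wb 0
    obtain ⟨c2, hb2S, hb2⟩ := wb 1
    obtain ⟨c3, hb3S, hb3⟩ := wb 2
    exact key a1 ha1 c1 hb1 a2 ha2 c2 hb2 a3 ha3 c3 hb3
      ⟨mem_Es_mp (hUQ a1 ha1S a2 ha2S a3 ha3S),
       mem_Es_mp (hUQ a1 ha1S a2 ha2S c3 hb3S),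
       mem_Es_mp (hUQ a1 ha1S c2 hb2S a3 ha3S),
       mem_Es_mp (hUQ a1 ha1S c2 hb2S c3 hb3S),
       mem_Es_mp (hUQ c1 hb1S a2 ha2S a3 ha3S),
       mem_Es_mp (hUQ c1 hb1S a2 ha2S c3 hb3S),
       mem_Es_mp (hUQ c1 hb1S c2 hb2S a3 ha3S),
       mem_Es_mp (hUQ c1 hb1S c2 hb2S c3 hb3S)⟩
  obtain ⟨j, hj | hj⟩ := hkey
  · exact Or.inl (dominate hj)
  · exact Or.inr (dominate hj)
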